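/- Let n ≥ 1, D ≥ 3, let σ, τ be D-tuples of permutations of Fin n and let η be a permutation of Fin n. Assume K_p(σ) = 1 and ω̄(σ;η) = 0 (σ is purely connected and melonic with canonical pairing η). If τ_c η⁻¹ ⪯ σ_c η⁻¹ for every c ∈ {1,…,D}, then: ω̄(τ;η) = 0, K_p(τ⌢η) = K_p(τ) (every pure connected component of τ is preserved by the pairing η), and K_p(σ⌢τ) + d(σ,τ) = K_p(τ). -/

import Mathlib

/-- `#π`: the number of orbits of a permutation of `Fin n`
(its cycles, counting fixed points). -/
def permOrbits {n : ℕ} (π : Equiv.Perm (Fin n)) : ℕ :=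
  Multiset.card π.cycleType + (Finset.univ.filter fun x => π x = x).card

/-- `|π| = n - #π`, the minimal number of transpositions whose product is `π`. -/
def permLen {n : ℕ} (π : Equiv.Perm (Fin n)) : ℕ := n - permOrbits π

/-- The bipartite graph on `Fin n ⊕ Fin n` with an edge between `inl s` and
`inr t` exactly when `t = σ_c s` for some component `σ_c` of the tuple. -/
def pairGraph {n D : ℕ} (σ : Fin D → Equiv.Perm (Fin n)) :
    SimpleGraph ((Fin n) ⊕ (Fin n)) :=
  SimpleGraph.fromRel fun a b =>
    ∃ s t : Fin n, a = Sum.inl s ∧ b = Sum.inr t ∧ ∃ c, σ c s = t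

/-- `K_p(σ)`: the number of pure connected components of `σ`. -/
noncomputable def Kp {n D : ℕ} (σ : Fin D → Equiv.Perm (Fin n)) : ℕ :=
  Nat.card (pairGraph σ).ConnectedComponent

/-- `d(σ,η) = Σ_c |σ_c η⁻¹|`. -/
def dEta {n D : ℕ} (σ : Fin D → Equiv.Perm (Fin n)) (η : Equiv.Perm (Fin n)) : ℕ :=
  ∑ c, permLen (σ c * η⁻¹)

/-- `d(σ,τ) = Σ_c |σ_c τ_c⁻¹|`. -/
def dTuple {n D : ℕ} (σ τ : Fin D → Equiv.Perm (Fin n)) : ℕ :=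
  ∑ c, permLen (σ c * (τ c)⁻¹)

/-- The degree `ω(σ) = Σ_{c₁<c₂} |σ_{c₁} σ_{c₂}⁻¹| − (D−1)(n − K_p(σ))`,
an integer. -/
noncomputable def degInv {n D : ℕ} (σ : Fin D → Equiv.Perm (Fin n)) : ℤ :=
  (∑ p ∈ Finset.univ.filter (fun p : Fin D × Fin D => p.1 < p.2),
      (permLen (σ p.1 * (σ p.2)⁻¹) : ℤ)) -
    ((D : ℤ) - 1) * ((n : ℤ) - (Kp σ : ℤ))

/-- `ω̄(σ;η) = D·K_p(σ⌢η) − (D−1)·K_p(σ) − n + d(σ,η)`, an integer. -/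
noncomputable def omegaBar {n D : ℕ} (σ : Fin D → Equiv.Perm (Fin n))
    (η : Equiv.Perm (Fin n)) : ℤ :=
  (D : ℤ) * (Kp (Fin.snoc σ η : Fin (D + 1) → Equiv.Perm (Fin n)) : ℤ) -
    ((D : ℤ) - 1) * (Kp σ : ℤ) - (n : ℤ) + (dEta σ η : ℤ)

/-- `α ⪯ β`: the permutation `α` lies on a geodesic from the identity to `β`,
i.e. `|α| + |α β⁻¹| = |β|`. -/
def geodesicLe {n : ℕ} (α β : Equiv.Perm (Fin n)) : Prop :=
  permLen α + permLen (α * β⁻¹) = permLen β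



section PermLemmas

lemma Equiv.Perm.inv_apply_self {α : Type*} (f : Equiv.Perm α) (x : α) : f⁻¹ (f x) = x :=
  f.symm_apply_apply x

lemma Equiv.Perm.apply_inv_self {α : Type*} (f : Equiv.Perm α) (x : α) : f (f⁻¹ x) = x :=
  f.apply_symm_apply x

open Equiv Equiv.Perm Finset

variable {n : ℕ}

lemma fixed_card (g : Perm (Fin n)) :
    (Finset.univ.filter fun x => g x = x).card = n - g.support.card := by
  have h := Finset.card_filter_add_card_filter_not
    (s := (Finset.univ : Finset (Fin n))) (p := fun x => g x = x)
  have hs : (Finset.univ.filter fun x => ¬ g x = x) = g.support := by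
    ext x; simp [Equiv.Perm.mem_support]
  rw [hs] at h
  have := Finset.card_univ (α := Fin n)
  simp [Fintype.card_fin] at this h
  omega

lemma support_card_le (g : Perm (Fin n)) : g.support.card ≤ n := by
  simpa using Finset.card_le_card (Finset.subset_univ g.support)

lemma two_mul_card_le_sum (m : Multiset ℕ) (h : ∀ x ∈ m, 2 ≤ x) :
    2 * Multiset.card m ≤ m.sum := by
  induction m using Multiset.induction with
  | empty => simp
  | cons a s ih =>
    simp only [Multiset.card_cons, Multiset.sum_cons]
    have h2 := h a (by simp)
    have := ih (fun x hx => h x (by simp [hx]))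
    omega

lemma permOrbits_eq (g : Perm (Fin n)) :
    permOrbits g = Multiset.card g.cycleType + (n - g.support.card) := by
  rw [permOrbits, fixed_card]

lemma cycleType_card_bounds (g : Perm (Fin n)) :
    2 * Multiset.card g.cycleType ≤ g.support.card := by
  rw [← Equiv.Perm.sum_cycleType]
  exact two_mul_card_le_sum _ (fun x hx => Equiv.Perm.two_le_of_mem_cycleType hx)

lemma permOrbits_le (g : Perm (Fin n)) : permOrbits g ≤ n := by
  have h1 := cycleType_card_bounds g
  have h2 := support_card_le g
  rw [permOrbits_eq]; omega

lemma permOrbits_one : permOrbits (1 : Perm (Fin n)) = n := by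
  rw [permOrbits_eq]; simp

lemma permOrbits_eq_n_iff (g : Perm (Fin n)) : permOrbits g = n ↔ g = 1 := by
  constructor
  · intro h
    have h1 := cycleType_card_bounds g
    have h2 := support_card_le g
    rw [permOrbits_eq] at h
    have : Multiset.card g.cycleType = 0 := by omega
    exact Equiv.Perm.card_cycleType_eq_zero.mp this
  · rintro rfl; exact permOrbits_one

lemma permLen_eq_zero_iff (g : Perm (Fin n)) : permLen g = 0 ↔ g = 1 := by
  rw [permLen, ← permOrbits_eq_n_iff]
  have := permOrbits_le g
  omega

lemma permOrbits_inv (g : Perm (Fin n)) : permOrbits g⁻¹ = permOrbits g := by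
  rw [permOrbits_eq, permOrbits_eq, Equiv.Perm.cycleType_inv, Equiv.Perm.support_inv]

lemma permLen_inv (g : Perm (Fin n)) : permLen g⁻¹ = permLen g := by
  rw [permLen, permLen, permOrbits_inv]

lemma permOrbits_disjoint_mul {f g : Perm (Fin n)} (h : Equiv.Perm.Disjoint f g) :
    permOrbits (f * g) + n = permOrbits f + permOrbits g := by
  have hct := h.cycleType_mul
  have hsupp : (f * g).support = f.support ∪ g.support := h.support_mul
  have hcard : (f * g).support.card = f.support.card + g.support.card := by
    rw [hsupp, Finset.card_union_of_disjoint h.disjoint_support]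
  have hle := support_card_le (f * g)
  rw [hcard] at hle
  have h1 := support_card_le f
  have h2 := support_card_le g
  rw [permOrbits_eq, permOrbits_eq, permOrbits_eq, hct, hcard, Multiset.card_add]
  omega

lemma orbits_isCycle {g : Perm (Fin n)} (h : IsCycle g) :
    permOrbits g = 1 + (n - g.support.card) := by
  rw [permOrbits_eq, h.cycleType]
  simp

lemma permOrbits_mul_swap (w : Perm (Fin n)) (a : Fin n) (ha : w a ≠ a) :
    permOrbits (w * Equiv.swap a (w a)) = permOrbits w + 1 := by
  classical
  set t := Equiv.swap a (w a) with ht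
  set c := w.cycleOf a with hcdef
  have hca : c a = w a := w.cycleOf_apply_self a
  have hcyc : IsCycle c := isCycle_cycleOf w ha
  have hmem : ∀ x, x ∈ c.support ↔ w.SameCycle a x := by
    intro x
    rw [Equiv.Perm.mem_support_cycleOf_iff]
    simp [Equiv.Perm.mem_support, ha]
  have hcapp : ∀ x, w.SameCycle a x → c x = w x := by
    intro x hx; rw [hcdef, Equiv.Perm.cycleOf_apply, if_pos hx]
  have hcfix : ∀ x, ¬ w.SameCycle a x → c x = x := by
    intro x hx; rw [hcdef, Equiv.Perm.cycleOf_apply, if_neg hx]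
  set r := c⁻¹ * w with hrdef
  have hw : w = c * r := by rw [hrdef, mul_inv_cancel_left]
  have hrfix : ∀ x, w.SameCycle a x → r x = x := by
    intro x hx
    have h1 : c x = w x := hcapp x hx
    have : r x = c⁻¹ (w x) := rfl
    rw [this, ← h1, Equiv.Perm.inv_apply_self]
  have hrelse : ∀ x, ¬ w.SameCycle a x → r x = w x := by
    intro x hx
    have hwx : ¬ w.SameCycle a (w x) := by
      rw [Equiv.Perm.sameCycle_apply_right]; exact hx
    have h1 : c (w x) = w x := hcfix _ hwx
    have : r x = c⁻¹ (w x) := rfl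
    rw [this]
    nth_rewrite 1 [← h1]
    rw [Equiv.Perm.inv_apply_self]
  have hdisj_cr : c.Disjoint r := by
    intro x
    by_cases hx : w.SameCycle a x
    · exact Or.inr (hrfix x hx)
    · exact Or.inl (hcfix x hx)
  have hsca : w.SameCycle a (w a) := ⟨1, by simp⟩
  have haa : w.SameCycle a a := Equiv.Perm.SameCycle.refl w a
  have hwwa : w (w a) ≠ w a := fun h => ha (w.injective h)
  have hane : a ≠ w a := Ne.symm ha
  have htfix : ∀ x, x ≠ a → x ≠ w a → t x = x := by
    intro x h1 h2; exact Equiv.swap_apply_of_ne_of_ne h1 h2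
  have hdisj_rt : r.Disjoint t := by
    intro x
    by_cases h1 : x = a
    · exact Or.inl (by rw [h1]; exact hrfix a haa)
    by_cases h2 : x = w a
    · exact Or.inl (by rw [h2]; exact hrfix _ hsca)
    · exact Or.inr (htfix x h1 h2)
  have hprod : w * t = (c * t) * r := by
    calc w * t = c * (r * t) := by rw [← mul_assoc, ← hw]
    _ = c * (t * r) := by rw [(hdisj_rt.commute).eq]
    _ = (c * t) * r := by rw [mul_assoc]
  have hdisj_ctr : (c * t).Disjoint r := by
    intro x
    by_cases hx : w.SameCycle a x
    · exact Or.inr (hrfix x hx)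
    · left
      have h1 : x ≠ a := fun h => hx (h ▸ haa)
      have h2 : x ≠ w a := fun h => hx (h ▸ hsca)
      have : t x = x := htfix x h1 h2
      show c (t x) = x
      rw [this, hcfix x hx]
  have key : permOrbits (c * t) = permOrbits c + 1 := by
    have hcane : c a ≠ a := by rw [hca]; exact ha
    by_cases h2 : c (c a) = a
    · -- c is the swap itself
      have hceq : c = Equiv.swap a (c a) := hcyc.eq_swap_of_apply_apply_eq_self hcane h2
      have hct : c = t := by rw [hceq, hca]
      have hone : c * t = 1 := by rw [hct]; exact Equiv.swap_mul_self _ _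
      have hn2 : 2 ≤ n := by
        have := support_card_le t
        rw [ht, Equiv.Perm.card_support_swap hane] at this
        exact this
      have hot : permOrbits t = 1 + (n - 2) := by
        have hic : IsCycle t := Equiv.Perm.isCycle_swap hane
        rw [orbits_isCycle hic, ht, Equiv.Perm.card_support_swap hane]
      rw [hone, permOrbits_one, hct, hot]
      omega
    · -- cycle shortening
      have hxne : c⁻¹ (c a) ≠ c a := by
        rw [Equiv.Perm.inv_apply_self]; exact Ne.symm hcane
      have hffx : c⁻¹ (c⁻¹ (c a)) ≠ c a := by
        rw [Equiv.Perm.inv_apply_self]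
        intro hh
        apply h2
        have : c (c⁻¹ a) = c (c a) := congrArg c hh
        rw [Equiv.Perm.apply_inv_self] at this
        exact this.symm
      have hic' : IsCycle (Equiv.swap (c a) (c⁻¹ (c a)) * c⁻¹) :=
        (hcyc.inv).swap_mul hxne hffx
      have hswrw : Equiv.swap (c a) (c⁻¹ (c a)) = t := by
        rw [Equiv.Perm.inv_apply_self, ht, hca, Equiv.swap_comm]
      have hinv : (c * t)⁻¹ = Equiv.swap (c a) (c⁻¹ (c a)) * c⁻¹ := by
        rw [hswrw, mul_inv_rev, ht, Equiv.swap_inv, ← ht]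
      have hicct : IsCycle (c * t) := by
        have := hic'.inv
        rw [← hinv, inv_inv] at this
        exact this
      have htca : t (c a) = a := by rw [ht, hca, Equiv.swap_apply_right]
      have hta : t a = c a := by rw [ht, hca, Equiv.swap_apply_left]
      have hsuppct : (c * t).support = c.support.erase (c a) := by
        ext y
        rw [Finset.mem_erase, Equiv.Perm.mem_support, Equiv.Perm.mem_support]
        rcases eq_or_ne y (c a) with rfl | hy1
        · have h1 : (c * t) (c a) = c a := by show c (t (c a)) = c a; rw [htca]
          simp [h1]
        rcases eq_or_ne y a with hy2 | hy2
        · rw [hy2]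
          have h1 : (c * t) a = c (c a) := by show c (t a) = _; rw [hta]
          rw [h1]
          exact iff_of_true h2 ⟨Ne.symm hcane, hcane⟩
        · have h1 : (c * t) y = c y := by
            show c (t y) = c y
            rw [htfix y hy2 (by rw [← hca]; exact hy1)]
          rw [h1]
          simp [hy1]
      have hmemca : c a ∈ c.support := by
        rw [Equiv.Perm.mem_support]
        intro hh
        exact hcane (c.injective hh)
      have hcardct : (c * t).support.card = c.support.card - 1 := by
        rw [hsuppct, Finset.card_erase_of_mem hmemca]
      have hs2 : 2 ≤ c.support.card := hcyc.two_le_card_support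
      have hsn : c.support.card ≤ n := support_card_le c
      rw [orbits_isCycle hicct, orbits_isCycle hcyc, hcardct]
      omega
  -- combine
  have e1 := permOrbits_disjoint_mul hdisj_ctr
  have e2 := permOrbits_disjoint_mul hdisj_cr
  rw [← hprod] at e1
  rw [← hw] at e2
  omega

/-- The same-cycle setoid of a permutation. -/
def scSetoid (g : Perm (Fin n)) : Setoid (Fin n) :=
  ⟨g.SameCycle, ⟨Equiv.Perm.SameCycle.refl g, fun h => h.symm, fun h h' => h.trans h'⟩⟩

lemma card_sc_quotient (g : Perm (Fin n)) :
    Nat.card (Quotient (scSetoid g)) = permOrbits g := by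
  classical
  -- bijection with cycle factors ⊕ fixed points
  let T := {c // c ∈ g.cycleFactorsFinset} ⊕ {x : Fin n // g x = x}
  have hwd : ∀ x y : Fin n, g.SameCycle x y →
      (if h : g x = x then (Sum.inr ⟨x, h⟩ : T) else
        Sum.inl ⟨g.cycleOf x, Equiv.Perm.cycleOf_mem_cycleFactorsFinset_iff.mpr
          (Equiv.Perm.mem_support.mpr h)⟩) =
      (if h : g y = y then (Sum.inr ⟨y, h⟩ : T) else
        Sum.inl ⟨g.cycleOf y, Equiv.Perm.cycleOf_mem_cycleFactorsFinset_iff.mpr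
          (Equiv.Perm.mem_support.mpr h)⟩) := by
    intro x y hxy
    by_cases hx : g x = x
    · obtain ⟨i, hi⟩ := hxy
      have : y = x := by rw [← hi, zpow_apply_eq_self_of_apply_eq_self hx]
      subst this
      rfl
    · have hy : ¬ g y = y := by
        intro hy
        obtain ⟨i, hi⟩ := hxy.symm
        have : x = y := by rw [← hi, zpow_apply_eq_self_of_apply_eq_self hy]
        exact hx (this ▸ hy)
      rw [dif_neg hx, dif_neg hy]
      congr 1
      exact Subtype.ext (Equiv.Perm.SameCycle.cycleOf_eq hxy)
  let f0 : Fin n → T := fun x =>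
    if h : g x = x then (Sum.inr ⟨x, h⟩ : T) else
      Sum.inl ⟨g.cycleOf x, Equiv.Perm.cycleOf_mem_cycleFactorsFinset_iff.mpr
        (Equiv.Perm.mem_support.mpr h)⟩
  let F : Quotient (scSetoid g) → T := Quotient.lift f0 hwd
  have hbij : Function.Bijective F := by
    constructor
    · intro q₁ q₂ h
      induction q₁ using Quotient.ind with | _ x =>
      induction q₂ using Quotient.ind with | _ y =>
      apply Quotient.sound
      show g.SameCycle x y
      have h' : f0 x = f0 y := h
      by_cases hx : g x = x <;> by_cases hy : g y = y
      · simp only [f0, dif_pos hx, dif_pos hy] at h'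
        injection h' with h2
        have hxy : x = y := Subtype.ext_iff.mp h2
        exact hxy ▸ Equiv.Perm.SameCycle.refl g x
      · exact absurd h' (by simp [f0, hx, hy])
      · exact absurd h' (by simp [f0, hx, hy])
      · simp only [f0, dif_neg hx, dif_neg hy] at h'
        injection h' with h2
        have hcyc : g.cycleOf x = g.cycleOf y := Subtype.ext_iff.mp h2
        have hmem : y ∈ (g.cycleOf x).support := by
          rw [hcyc, Equiv.Perm.mem_support_cycleOf_iff]
          exact ⟨Equiv.Perm.SameCycle.refl g y, Equiv.Perm.mem_support.mpr hy⟩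
        rw [Equiv.Perm.mem_support_cycleOf_iff] at hmem
        exact hmem.1
    · intro v
      cases v with
      | inl c =>
        obtain ⟨c, hc⟩ := c
        have hcyc : c.IsCycle := (Equiv.Perm.mem_cycleFactorsFinset_iff.mp hc).1
        obtain ⟨x, hx⟩ := hcyc.nonempty_support
        have hgx : g x ≠ x := by
          have h2 := (Equiv.Perm.mem_cycleFactorsFinset_iff.mp hc).2 x hx
          rw [Equiv.Perm.mem_support] at hx
          rw [← h2]; exact hx
        refine ⟨Quotient.mk _ x, ?_⟩
        show f0 x = Sum.inl ⟨c, hc⟩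
        simp only [f0, dif_neg hgx]
        congr 1
        exact Subtype.ext (Equiv.Perm.cycle_is_cycleOf hx hc).symm
      | inr p =>
        obtain ⟨x, hx⟩ := p
        refine ⟨Quotient.mk _ x, ?_⟩
        show f0 x = Sum.inr ⟨x, hx⟩
        simp only [f0, dif_pos hx]
  have := Nat.card_eq_of_bijective F hbij
  rw [this]
  have h1 : Nat.card T = Nat.card {c // c ∈ g.cycleFactorsFinset} + Nat.card {x : Fin n // g x = x} := by
    simp [T, Nat.card_sum]
  rw [h1, permOrbits]
  congr 1
  · rw [Nat.card_eq_fintype_card, Fintype.card_coe]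
    rw [Equiv.Perm.cycleType_def, Multiset.card_map]
    rfl
  · rw [Nat.card_eq_fintype_card, Fintype.card_subtype]

/-- The subspace of functions invariant under `g`. -/
def fixS (g : Perm (Fin n)) : Submodule ℚ (Fin n → ℚ) where
  carrier := {f | ∀ x, f (g x) = f x}
  add_mem' := by intro f₁ f₂ h₁ h₂ x; simp [Pi.add_apply, h₁ x, h₂ x]
  zero_mem' := by intro x; rfl
  smul_mem' := by intro c f hf x; simp [hf x]

lemma mem_fixS {g : Perm (Fin n)} {f : Fin n → ℚ} :
    f ∈ fixS g ↔ ∀ x, f (g x) = f x := Iff.rfl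

lemma fix_const_on_cycles {g : Perm (Fin n)} {f : Fin n → ℚ} (hf : f ∈ fixS g)
    {x y : Fin n} (h : g.SameCycle x y) : f x = f y := by
  rw [mem_fixS] at hf
  obtain ⟨i, hi⟩ := h
  subst hi
  have key : ∀ (i : ℤ) (x : Fin n), f ((g ^ i) x) = f x := by
    intro i
    induction i using Int.induction_on with
    | zero => intro x; simp
    | succ k ih =>
      intro x
      have h1 : (g ^ ((k : ℤ) + 1)) x = (g ^ (k : ℤ)) (g x) := by
        rw [zpow_add_one, Equiv.Perm.mul_apply]
      rw [h1, ih (g x), hf x]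
    | pred k ih =>
      intro x
      have h1 : (g ^ (-(k : ℤ) - 1)) x = (g ^ (-(k : ℤ))) (g⁻¹ x) := by
        rw [zpow_sub_one, Equiv.Perm.mul_apply]
      have h2 : f (g⁻¹ x) = f x := by
        have := hf (g⁻¹ x)
        rw [Equiv.Perm.apply_inv_self] at this
        exact this.symm
      rw [h1, ih (g⁻¹ x), h2]
  exact (key i x).symm

lemma finrank_fixS (g : Perm (Fin n)) :
    Module.finrank ℚ (fixS g) = permOrbits g := by
  classical
  letI : Fintype (Quotient (scSetoid g)) := Fintype.ofFinite _
  let L : (Quotient (scSetoid g) → ℚ) →ₗ[ℚ] (Fin n → ℚ) :=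
    { toFun := fun h => fun x => h (Quotient.mk _ x)
      map_add' := by intros; rfl
      map_smul' := by intros; rfl }
  have hinj : Function.Injective L := by
    intro h₁ h₂ hh
    funext q
    induction q using Quotient.ind with | _ x => exact congrFun hh x
  have hrange : LinearMap.range L = fixS g := by
    apply le_antisymm
    · rintro f ⟨h, rfl⟩
      intro x
      show h ⟦g x⟧ = h ⟦x⟧
      congr 1
      apply Quotient.sound
      show g.SameCycle (g x) x
      exact Equiv.Perm.sameCycle_apply_left.mpr (Equiv.Perm.SameCycle.refl g x)
    · intro f hf
      refine ⟨fun q => f q.out, ?_⟩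
      funext x
      show f (⟦x⟧ : Quotient (scSetoid g)).out = f x
      have hrel : (scSetoid g).r (⟦x⟧ : Quotient (scSetoid g)).out x :=
        Quotient.exact (Quotient.out_eq _)
      exact fix_const_on_cycles hf hrel
  have h1 : Module.finrank ℚ (LinearMap.range L) = Fintype.card (Quotient (scSetoid g)) := by
    rw [LinearMap.finrank_range_of_inj hinj, Module.finrank_fintype_fun_eq_card]
  rw [← hrange, h1, ← Nat.card_eq_fintype_card, card_sc_quotient]

lemma permOrbits_mul_ge (g h : Perm (Fin n)) :
    permOrbits g + permOrbits h ≤ permOrbits (g * h) + n := by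
  have hsub : fixS g ⊓ fixS h ≤ fixS (g * h) := by
    intro f hf
    obtain ⟨hg, hh⟩ := Submodule.mem_inf.mp hf
    intro x
    show f (g (h x)) = f x
    rw [mem_fixS] at hg hh
    rw [hg (h x), hh x]
  have hdim := Submodule.finrank_sup_add_finrank_inf_eq (fixS g) (fixS h)
  have h2 : Module.finrank ℚ ((fixS g ⊓ fixS h : Submodule ℚ (Fin n → ℚ))) ≤
      Module.finrank ℚ (fixS (g * h)) := Submodule.finrank_mono hsub
  have h3 : Module.finrank ℚ ((fixS g ⊔ fixS h : Submodule ℚ (Fin n → ℚ))) ≤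
      Module.finrank ℚ (Fin n → ℚ) := Submodule.finrank_le _
  rw [Module.finrank_fintype_fun_eq_card, Fintype.card_fin] at h3
  rw [finrank_fixS, finrank_fixS] at hdim
  rw [finrank_fixS] at h2
  omega

lemma permLen_mul_le (g h : Perm (Fin n)) :
    permLen (g * h) ≤ permLen g + permLen h := by
  have h1 := permOrbits_mul_ge g h
  have h2 := permOrbits_le g
  have h3 := permOrbits_le h
  have h4 := permOrbits_le (g * h)
  unfold permLen
  omega

lemma permLen_swap {u v : Fin n} (h : u ≠ v) : permLen (Equiv.swap u v) = 1 := by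
  have hic : IsCycle (Equiv.swap u v) := Equiv.Perm.isCycle_swap h
  have h1 := orbits_isCycle hic
  rw [Equiv.Perm.card_support_swap h] at h1
  have h2 := support_card_le (Equiv.swap u v)
  rw [Equiv.Perm.card_support_swap h] at h2
  unfold permLen
  omega

lemma exists_peel (g : Perm (Fin n)) (hg : g ≠ 1) :
    ∃ u v : Fin n, u ≠ v ∧ permLen (Equiv.swap u v * g) + 1 = permLen g := by
  have hginv : g⁻¹ ≠ 1 := fun h => hg (by rw [← inv_inv g, h, inv_one])
  have hex : ∃ a, g⁻¹ a ≠ a := by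
    by_contra hc
    push_neg at hc
    exact hginv (Equiv.ext fun x => hc x)
  obtain ⟨a, ha⟩ := hex
  refine ⟨a, g⁻¹ a, Ne.symm ha, ?_⟩
  have hkey := permOrbits_mul_swap g⁻¹ a ha
  have hinv : (Equiv.swap a (g⁻¹ a) * g)⁻¹ = g⁻¹ * Equiv.swap a (g⁻¹ a) := by
    rw [mul_inv_rev, Equiv.swap_inv]
  have ho : permOrbits (Equiv.swap a (g⁻¹ a) * g) = permOrbits g + 1 := by
    rw [← permOrbits_inv (Equiv.swap a (g⁻¹ a) * g), hinv, hkey, permOrbits_inv]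
  have h2 := permOrbits_le g
  have h3 : permOrbits g ≠ n := fun h => hg ((permOrbits_eq_n_iff g).mp h)
  unfold permLen
  omega

lemma permLen_cast (g : Perm (Fin n)) : (permLen g : ℤ) = n - permOrbits g := by
  have := permOrbits_le g
  unfold permLen
  omega


end PermLemmas

section GraphLemmas

variable {V : Type*} [Finite V]

lemma cc_card_mono {G H : SimpleGraph V} (h : G ≤ H) :
    Nat.card H.ConnectedComponent ≤ Nat.card G.ConnectedComponent := by
  apply Nat.card_le_card_of_surjective
    (SimpleGraph.ConnectedComponent.map (SimpleGraph.Hom.ofLE h))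
  intro C
  induction C using SimpleGraph.ConnectedComponent.ind with | _ v =>
  exact ⟨G.connectedComponentMk v, rfl⟩

lemma reach_of_reach_of_adj_imp {G H : SimpleGraph V}
    (hadj : ∀ x y, H.Adj x y → G.Reachable x y) :
    ∀ x y, H.Reachable x y → G.Reachable x y := by
  intro x y hr
  obtain ⟨w⟩ := hr
  induction w with
  | nil => exact SimpleGraph.Reachable.refl _
  | cons h p ih => exact (hadj _ _ h).trans ih

/-- If all new edges connect already-reachable vertices, the component count is
unchanged. -/
lemma cc_card_eq_of_adj_reach {G H : SimpleGraph V} (hle : G ≤ H)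
    (hadj : ∀ x y, H.Adj x y → G.Reachable x y) :
    Nat.card G.ConnectedComponent = Nat.card H.ConnectedComponent := by
  have hR := reach_of_reach_of_adj_imp hadj
  apply Nat.card_eq_of_bijective
    (SimpleGraph.ConnectedComponent.map (SimpleGraph.Hom.ofLE hle))
  constructor
  · intro C₁ C₂ hC
    induction C₁ using SimpleGraph.ConnectedComponent.ind with | _ v =>
    induction C₂ using SimpleGraph.ConnectedComponent.ind with | _ w =>
    simp only [SimpleGraph.ConnectedComponent.map_mk] at hC
    exact SimpleGraph.ConnectedComponent.sound
      (hR _ _ (SimpleGraph.ConnectedComponent.exact hC))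
  · intro C
    induction C using SimpleGraph.ConnectedComponent.ind with | _ v =>
    exact ⟨G.connectedComponentMk v, rfl⟩

/-- Walk trichotomy: reachability in `G` plus one extra edge `{a,b}`. -/
lemma reach_tricho {G H : SimpleGraph V} {a b : V}
    (hadj : ∀ x y, H.Adj x y → G.Adj x y ∨ (x = a ∧ y = b) ∨ (x = b ∧ y = a)) :
    ∀ x y, H.Reachable x y → G.Reachable x y ∨
      (G.Reachable x a ∧ G.Reachable b y) ∨ (G.Reachable x b ∧ G.Reachable a y) := by
  intro x y hr
  obtain ⟨w⟩ := hr
  induction w with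
  | nil => exact Or.inl (SimpleGraph.Reachable.refl _)
  | @cons u z y h p ih =>
    rcases hadj _ _ h with he | ⟨rfl, rfl⟩ | ⟨rfl, rfl⟩
    · rcases ih with h1 | ⟨h1, h2⟩ | ⟨h1, h2⟩
      · exact Or.inl (he.reachable.trans h1)
      · exact Or.inr (Or.inl ⟨he.reachable.trans h1, h2⟩)
      · exact Or.inr (Or.inr ⟨he.reachable.trans h1, h2⟩)
    · rcases ih with h1 | ⟨h1, h2⟩ | ⟨h1, h2⟩
      · exact Or.inr (Or.inl ⟨SimpleGraph.Reachable.refl _, h1⟩)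
      · exact Or.inl (h1.symm.trans h2)
      · exact Or.inl h2
    · rcases ih with h1 | ⟨h1, h2⟩ | ⟨h1, h2⟩
      · exact Or.inr (Or.inr ⟨SimpleGraph.Reachable.refl _, h1⟩)
      · exact Or.inl h2
      · exact Or.inl (h1.symm.trans h2)
  -- done

/-- Adding one extra edge pair decreases the component count by at most one. -/
lemma cc_card_le_one_extra {G H : SimpleGraph V} {a b : V} (hle : G ≤ H)
    (hadj : ∀ x y, H.Adj x y → G.Adj x y ∨ (x = a ∧ y = b) ∨ (x = b ∧ y = a)) :
    Nat.card G.ConnectedComponent ≤ Nat.card H.ConnectedComponent + 1 := by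
  classical
  haveI : Finite G.ConnectedComponent := Quot.finite _
  haveI : Finite H.ConnectedComponent := Quot.finite _
  haveI := Fintype.ofFinite H.ConnectedComponent
  have htri := reach_tricho hadj
  let F : G.ConnectedComponent → Option H.ConnectedComponent := fun C =>
    if C = G.connectedComponentMk a then none
    else some (C.map (SimpleGraph.Hom.ofLE hle))
  have hinj : Function.Injective F := by
    intro C₁ C₂ hC
    by_cases h1 : C₁ = G.connectedComponentMk a <;>
      by_cases h2 : C₂ = G.connectedComponentMk a
    · rw [h1, h2]
    · simp only [F, if_pos h1, if_neg h2] at hC; exact absurd hC.symm (Option.some_ne_none _)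
    · simp only [F, if_neg h1, if_pos h2] at hC; exact absurd hC (Option.some_ne_none _)
    · simp only [F, if_neg h1, if_neg h2, Option.some.injEq] at hC
      induction C₁ using SimpleGraph.ConnectedComponent.ind with | _ v =>
      induction C₂ using SimpleGraph.ConnectedComponent.ind with | _ w =>
      simp only [SimpleGraph.ConnectedComponent.map_mk] at hC
      have hreach := SimpleGraph.ConnectedComponent.exact hC
      rcases htri _ _ hreach with hh | ⟨hh1, hh2⟩ | ⟨hh1, hh2⟩
      · exact SimpleGraph.ConnectedComponent.sound hh
      · exact absurd (SimpleGraph.ConnectedComponent.sound hh1) h1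
      · exact absurd (SimpleGraph.ConnectedComponent.sound hh2.symm) h2
  calc Nat.card G.ConnectedComponent ≤ Nat.card (Option H.ConnectedComponent) :=
        Nat.card_le_card_of_injective F hinj
  _ = Nat.card H.ConnectedComponent + 1 := Finite.card_option

end GraphLemmas


section PairGraphLemmas

open Equiv SimpleGraph Sum

variable {n D : ℕ}

lemma pairGraph_adj {σ : Fin D → Perm (Fin n)} {x y : (Fin n) ⊕ (Fin n)} :
    (pairGraph σ).Adj x y ↔ x ≠ y ∧
      ((∃ s t, x = Sum.inl s ∧ y = Sum.inr t ∧ ∃ c, σ c s = t) ∨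
       (∃ s t, y = Sum.inl s ∧ x = Sum.inr t ∧ ∃ c, σ c s = t)) := by
  rw [pairGraph, SimpleGraph.fromRel_adj]

lemma pairGraph_le_of_sub {D' : ℕ} {σ : Fin D → Perm (Fin n)} {σ' : Fin D' → Perm (Fin n)}
    (h : ∀ c, ∃ c', σ' c' = σ c) : pairGraph σ ≤ pairGraph σ' := by
  intro x y hxy
  rw [pairGraph_adj] at hxy ⊢
  refine ⟨hxy.1, ?_⟩
  rcases hxy.2 with ⟨s, t, h1, h2, c, h3⟩ | ⟨s, t, h1, h2, c, h3⟩
  · obtain ⟨c', hc'⟩ := h c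
    exact Or.inl ⟨s, t, h1, h2, c', by rw [hc', h3]⟩
  · obtain ⟨c', hc'⟩ := h c
    exact Or.inr ⟨s, t, h1, h2, c', by rw [hc', h3]⟩

lemma pairGraph_le_snoc (σ : Fin D → Perm (Fin n)) (x : Perm (Fin n)) :
    pairGraph σ ≤ pairGraph (Fin.snoc σ x : Fin (D+1) → Perm (Fin n)) :=
  pairGraph_le_of_sub fun c => ⟨c.castSucc, Fin.snoc_castSucc ..⟩

lemma Kp_pos (hn : 1 ≤ n) (σ : Fin D → Perm (Fin n)) : 1 ≤ Kp σ := by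
  haveI : Finite (pairGraph σ).ConnectedComponent := Quot.finite _
  haveI : Nonempty (pairGraph σ).ConnectedComponent :=
    ⟨(pairGraph σ).connectedComponentMk (Sum.inl ⟨0, hn⟩)⟩
  exact Nat.card_pos

lemma reach_imp_elim_eq {V : Type} {G : SimpleGraph V} {β : Type} (f : V → β)
    (hf : ∀ x y, G.Adj x y → f x = f y) :
    ∀ x y, G.Reachable x y → f x = f y := by
  intro x y hr
  obtain ⟨w⟩ := hr
  induction w with
  | nil => rfl
  | cons h p ih => exact (hf _ _ h).trans ih

lemma Kp_const (η : Perm (Fin n)) : Kp (fun _ : Fin (D+1) => η) = n := by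
  classical
  set G := pairGraph (fun _ : Fin (D+1) => η) with hG
  let f : (Fin n) ⊕ (Fin n) → Fin n := Sum.elim id (fun t => η⁻¹ t)
  have hf : ∀ x y, G.Adj x y → f x = f y := by
    intro x y hxy
    rw [hG, pairGraph_adj] at hxy
    rcases hxy.2 with ⟨s, t, rfl, rfl, _, h3⟩ | ⟨s, t, rfl, rfl, _, h3⟩ <;>
      simp [f, ← h3]
  let ψ : Fin n → G.ConnectedComponent := fun s => G.connectedComponentMk (Sum.inl s)
  have hbij : Function.Bijective ψ := by
    constructor
    · intro s s' hs
      have := reach_imp_elim_eq f hf _ _ (SimpleGraph.ConnectedComponent.exact hs)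
      simpa [f] using this
    · intro C
      induction C using SimpleGraph.ConnectedComponent.ind with | _ v =>
      cases v with
      | inl s => exact ⟨s, rfl⟩
      | inr t =>
        refine ⟨η⁻¹ t, SimpleGraph.ConnectedComponent.sound ?_⟩
        apply SimpleGraph.Adj.reachable
        rw [hG, pairGraph_adj]
        exact ⟨by simp, Or.inl ⟨η⁻¹ t, t, rfl, rfl, 0, by simp⟩⟩
  have := Nat.card_eq_of_bijective ψ hbij
  rw [Kp, ← this, Nat.card_eq_fintype_card, Fintype.card_fin]

lemma snoc_update {X : Type} (ρ : Fin D → X) (x y : X) (c : Fin D) :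
    (Fin.snoc (Function.update ρ c y) x : Fin (D+1) → X) =
      Function.update (Fin.snoc ρ x : Fin (D+1) → X) c.castSucc y := by
  funext i
  refine Fin.lastCases ?_ ?_ i
  · rw [Fin.snoc_last, Function.update_of_ne (Fin.castSucc_lt_last c).ne', Fin.snoc_last]
  · intro j
    rw [Fin.snoc_castSucc]
    by_cases hj : j = c
    · subst hj
      rw [Function.update_self, Function.update_self]
    · rw [Function.update_of_ne hj, Function.update_of_ne (by simpa using hj), Fin.snoc_castSucc]

lemma Kp_update_swap (ρ : Fin D → Perm (Fin n)) (c : Fin D) (u v : Fin n) (huv : u ≠ v) :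
    Kp ρ ≤ Kp (Function.update ρ c (Equiv.swap u v * ρ c)) + 1 := by
  classical
  set t := Equiv.swap u v with ht
  set G := pairGraph ρ with hGdef
  set G' := pairGraph (Function.update ρ c (t * ρ c)) with hG'def
  set W := pairGraph (Fin.snoc ρ (t * ρ c) : Fin (D+1) → Perm (Fin n)) with hWdef
  set a : (Fin n) ⊕ (Fin n) := Sum.inl ((ρ c)⁻¹ u) with hadef
  set b : (Fin n) ⊕ (Fin n) := Sum.inr v with hbdef
  set E : SimpleGraph ((Fin n) ⊕ (Fin n)) :=
    SimpleGraph.fromRel (fun x y => x = a ∧ y = b) with hEdef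
  have hGW : G ≤ W := pairGraph_le_snoc ρ (t * ρ c)
  have hG'W : G' ≤ W := by
    apply pairGraph_le_of_sub
    intro c'
    by_cases hc' : c' = c
    · subst hc'
      exact ⟨Fin.last D, by rw [Fin.snoc_last, Function.update_self]⟩
    · exact ⟨c'.castSucc, by rw [Fin.snoc_castSucc, Function.update_of_ne hc']⟩
  have hEW : E ≤ W := by
    intro x y hxy
    rw [hEdef, SimpleGraph.fromRel_adj] at hxy
    obtain ⟨hne, hrel⟩ := hxy
    have hab : W.Adj a b := by
      rw [hWdef, pairGraph_adj]
      refine ⟨by simp [hadef, hbdef], Or.inl ⟨(ρ c)⁻¹ u, v, rfl, rfl, Fin.last D, ?_⟩⟩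
      rw [Fin.snoc_last, Equiv.Perm.mul_apply, Equiv.Perm.apply_inv_self, ht,
        Equiv.swap_apply_left]
    rcases hrel with ⟨rfl, rfl⟩ | ⟨rfl, rfl⟩
    · exact hab
    · exact hab.symm
  have hMW : G ⊔ E ≤ W := sup_le hGW hEW
  have hGadj : ∀ (s : Fin n) (d : Fin D), G.Adj (Sum.inl s) (Sum.inr (ρ d s)) := by
    intro s d
    rw [hGdef, pairGraph_adj]
    exact ⟨by simp, Or.inl ⟨s, ρ d s, rfl, rfl, d, rfl⟩⟩
  have hEadj : E.Adj a b := by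
    rw [hEdef, SimpleGraph.fromRel_adj]
    exact ⟨by simp [hadef, hbdef], Or.inl ⟨rfl, rfl⟩⟩
  have hWM : ∀ x y, W.Adj x y → (G ⊔ E).Reachable x y := by
    have key : ∀ s t', (Fin.snoc ρ (t * ρ c) : Fin (D+1) → Perm (Fin n)) (Fin.last D) s = t' →
        (G ⊔ E).Reachable (Sum.inl s) (Sum.inr t') := by
      intro s t' hc''
      rw [Fin.snoc_last, Equiv.Perm.mul_apply] at hc''
      by_cases h1 : ρ c s = u
      · have hs : s = (ρ c)⁻¹ u := by rw [← h1, Equiv.Perm.inv_apply_self]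
        have htv : t' = v := by rw [← hc'', h1, ht, Equiv.swap_apply_left]
        rw [hs, htv]
        exact ((le_sup_right : E ≤ G ⊔ E) hEadj).reachable
      by_cases h2 : ρ c s = v
      · have htu : t' = u := by rw [← hc'', h2, ht, Equiv.swap_apply_right]
        rw [htu]
        have e1 : (G ⊔ E).Adj (Sum.inl s) (Sum.inr v) := by
          have := hGadj s c; rw [h2] at this
          exact (le_sup_left : G ≤ G ⊔ E) this
        have e2 : (G ⊔ E).Adj (Sum.inr v) (Sum.inl ((ρ c)⁻¹ u)) := by
          exact (le_sup_right : E ≤ G ⊔ E) hEadj.symm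
        have e3 : (G ⊔ E).Adj (Sum.inl ((ρ c)⁻¹ u)) (Sum.inr u) := by
          have := hGadj ((ρ c)⁻¹ u) c
          rw [Equiv.Perm.apply_inv_self] at this
          exact (le_sup_left : G ≤ G ⊔ E) this
        exact (e1.reachable.trans e2.reachable).trans e3.reachable
      · have htt : t' = ρ c s := by
          rw [← hc'', ht, Equiv.swap_apply_of_ne_of_ne h1 h2]
        rw [htt]
        exact ((le_sup_left : G ≤ G ⊔ E) (hGadj s c)).reachable
    have key2 : ∀ s t', (∃ c'', (Fin.snoc ρ (t * ρ c) : Fin (D+1) → Perm (Fin n)) c'' s = t') →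
        (G ⊔ E).Reachable (Sum.inl s) (Sum.inr t') := by
      rintro s t' ⟨c'', hc''⟩
      rcases Fin.eq_castSucc_or_eq_last c'' with ⟨d, rfl⟩ | rfl
      · rw [Fin.snoc_castSucc] at hc''
        subst hc''
        exact ((le_sup_left : G ≤ G ⊔ E) (hGadj s d)).reachable
      · exact key s t' hc''
    intro x y hxy
    rw [hWdef, pairGraph_adj] at hxy
    rcases hxy.2 with ⟨s, t', rfl, rfl, hex⟩ | ⟨s, t', rfl, rfl, hex⟩
    · exact key2 s t' hex
    · exact (key2 s t' hex).symm
  have hsupadj : ∀ x y, (G ⊔ E).Adj x y →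
      G.Adj x y ∨ (x = a ∧ y = b) ∨ (x = b ∧ y = a) := by
    intro x y hxy
    rcases hxy with h | h
    · exact Or.inl h
    · rw [hEdef, SimpleGraph.fromRel_adj] at h
      rcases h.2 with ⟨rfl, rfl⟩ | ⟨rfl, rfl⟩
      · exact Or.inr (Or.inl ⟨rfl, rfl⟩)
      · exact Or.inr (Or.inr ⟨rfl, rfl⟩)
  have step1 : Nat.card G.ConnectedComponent ≤ Nat.card (G ⊔ E).ConnectedComponent + 1 :=
    cc_card_le_one_extra le_sup_left hsupadj
  have step2 : Nat.card (G ⊔ E).ConnectedComponent = Nat.card W.ConnectedComponent :=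
    cc_card_eq_of_adj_reach hMW hWM
  have step3 : Nat.card W.ConnectedComponent ≤ Nat.card G'.ConnectedComponent :=
    cc_card_mono hG'W
  show Nat.card G.ConnectedComponent ≤ Nat.card G'.ConnectedComponent + 1
  omega

lemma sum_update_aux (f : Fin D → ℕ) (c : Fin D) (v : ℕ) :
    (∑ c', Function.update f c v c') + f c = (∑ c', f c') + v := by
  rw [Finset.sum_update_of_mem (Finset.mem_univ c), Finset.sdiff_singleton_eq_erase,
    ← Finset.sum_erase_add Finset.univ f (Finset.mem_univ c)]
  ring

lemma update_comp {X : Type} (F : X → ℕ) (ρ : Fin D → X) (c : Fin D) (x : X) :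
    (fun c' => F (Function.update ρ c x c')) =
      Function.update (fun c' => F (ρ c')) c (F x) := by
  funext c'
  by_cases h : c' = c
  · subst h; simp
  · simp [Function.update_of_ne h]

lemma sum_update_perm (F : Fin D → Perm (Fin n) → ℕ) (ρ : Fin D → Perm (Fin n)) (c : Fin D)
    (x : Perm (Fin n)) :
    (∑ c', F c' (Function.update ρ c x c')) + F c (ρ c) = (∑ c', F c' (ρ c')) + F c x := by
  have hcomp : (fun c' => F c' (Function.update ρ c x c')) =
      Function.update (fun c' => F c' (ρ c')) c (F c x) := by
    funext c'
    by_cases h : c' = c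
    · subst h; simp
    · simp [Function.update_of_ne h]
  rw [hcomp]
  exact sum_update_aux (fun c' => F c' (ρ c')) c (F c x)

/-- Upper bound: along geodesics below a melonic `σ`, `Kp ρ + d(ρ,η) ≤ n`. -/
lemma indUpper (k : ℕ) : ∀ {n D : ℕ} (σ ρ : Fin D → Perm (Fin n)) (η : Perm (Fin n)),
    Kp σ = 1 → dEta σ η + 1 = n →
    (∀ c, permLen (ρ c * η⁻¹) + permLen (ρ c * (σ c)⁻¹) = permLen (σ c * η⁻¹)) →
    (∑ c, permLen (ρ c * (σ c)⁻¹)) = k →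
    Kp ρ + dEta ρ η ≤ n := by
  induction k with
  | zero =>
    intro n D σ ρ η hK hd hgeo hk
    have hρσ : ρ = σ := by
      funext c
      have h0 : permLen (ρ c * (σ c)⁻¹) = 0 :=
        Finset.sum_eq_zero_iff.mp hk c (Finset.mem_univ c)
      have h1 : ρ c * (σ c)⁻¹ = 1 := (permLen_eq_zero_iff _).mp h0
      exact mul_inv_eq_one.mp h1
    subst hρσ
    omega
  | succ k ih =>
    intro n D σ ρ η hK hd hgeo hk
    have hex : ∃ c₀, permLen (ρ c₀ * (σ c₀)⁻¹) ≠ 0 := by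
      by_contra hall
      push_neg at hall
      rw [Finset.sum_eq_zero (fun c _ => hall c)] at hk
      omega
    obtain ⟨c₀, hc₀⟩ := hex
    set g := ρ c₀ * (σ c₀)⁻¹ with hgdef
    have hg1 : g ≠ 1 := fun h => hc₀ (by rw [hgdef] at h ⊢; rw [h]; exact (permLen_eq_zero_iff 1).mpr rfl)
    obtain ⟨u, v, huv, hpeel⟩ := exists_peel g hg1
    set t := Equiv.swap u v with htdef
    set ρ' := Function.update ρ c₀ (t * ρ c₀) with hρ'def
    have hρ'c₀ : ρ' c₀ = t * ρ c₀ := Function.update_self _ _ _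
    have f1 : ρ' c₀ * (σ c₀)⁻¹ = t * g := by rw [hρ'c₀, hgdef, mul_assoc]
    have f2 : ρ' c₀ * η⁻¹ = t * (ρ c₀ * η⁻¹) := by rw [hρ'c₀, mul_assoc]
    have hlen1 : permLen (ρ' c₀ * (σ c₀)⁻¹) + 1 = permLen (ρ c₀ * (σ c₀)⁻¹) := by
      rw [f1, ← hgdef]; exact hpeel
    have hlenle : permLen (ρ' c₀ * η⁻¹) ≤ permLen (ρ c₀ * η⁻¹) + 1 := by
      rw [f2]
      calc permLen (t * (ρ c₀ * η⁻¹)) ≤ permLen t + permLen (ρ c₀ * η⁻¹) :=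
        permLen_mul_le _ _
      _ = permLen (ρ c₀ * η⁻¹) + 1 := by rw [permLen_swap huv]; ring
    have hm : permLen (σ c₀ * η⁻¹) ≤
        permLen (ρ' c₀ * (σ c₀)⁻¹) + permLen (ρ' c₀ * η⁻¹) := by
      have harr : (ρ' c₀ * (σ c₀)⁻¹)⁻¹ * (ρ' c₀ * η⁻¹) = σ c₀ * η⁻¹ := by group
      have h := permLen_mul_le ((ρ' c₀ * (σ c₀)⁻¹)⁻¹) (ρ' c₀ * η⁻¹)
      rw [harr, permLen_inv] at h
      exact h
    have hgeoc := hgeo c₀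
    have hlen2 : permLen (ρ' c₀ * η⁻¹) = permLen (ρ c₀ * η⁻¹) + 1 := by omega
    have hgeo' : ∀ c, permLen (ρ' c * η⁻¹) + permLen (ρ' c * (σ c)⁻¹) =
        permLen (σ c * η⁻¹) := by
      intro c
      by_cases hc : c = c₀
      · subst hc; omega
      · rw [hρ'def, Function.update_of_ne hc]
        exact hgeo c
    have hs1 := sum_update_perm (fun _ π => permLen (π * η⁻¹)) ρ c₀ (t * ρ c₀)
    have hs2 := sum_update_perm (fun c π => permLen (π * (σ c)⁻¹)) ρ c₀ (t * ρ c₀)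
    rw [← hρ'def] at hs1 hs2
    have hd1 : dEta ρ' η = ∑ c', permLen (ρ' c' * η⁻¹) := rfl
    have hd2 : dEta ρ η = ∑ c', permLen (ρ c' * η⁻¹) := rfl
    rw [← hd1, ← hd2] at hs1
    rw [mul_assoc t (ρ c₀) η⁻¹, ← f2] at hs1
    rw [mul_assoc t (ρ c₀) (σ c₀)⁻¹, ← hgdef, ← f1] at hs2
    rw [← hgdef] at hlen1
    have hdnew : dEta ρ' η = dEta ρ η + 1 := by omega
    have hknew : (∑ c', permLen (ρ' c' * (σ c')⁻¹)) = k := by omega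
    have hIH := ih σ ρ' η hK hd hgeo' hknew
    have hgr : Kp ρ ≤ Kp ρ' + 1 := Kp_update_swap ρ c₀ u v huv
    omega

/-- Lower bound: `n ≤ Kp (ρ⌢η) + d(ρ,η)` for every tuple `ρ`. -/
lemma indLower (k : ℕ) : ∀ {n D : ℕ} (ρ : Fin D → Perm (Fin n)) (η : Perm (Fin n)),
    dEta ρ η = k →
    n ≤ Kp (Fin.snoc ρ η : Fin (D+1) → Perm (Fin n)) + dEta ρ η := by
  induction k with
  | zero =>
    intro n D ρ η hk
    have hρη : ∀ c, ρ c = η := by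
      intro c
      have h0 : permLen (ρ c * η⁻¹) = 0 :=
        Finset.sum_eq_zero_iff.mp hk c (Finset.mem_univ c)
      have h1 : ρ c * η⁻¹ = 1 := (permLen_eq_zero_iff _).mp h0
      exact mul_inv_eq_one.mp h1
    have hconst : (Fin.snoc ρ η : Fin (D+1) → Perm (Fin n)) = fun _ => η := by
      funext i
      refine Fin.lastCases ?_ ?_ i
      · rw [Fin.snoc_last]
      · intro j; rw [Fin.snoc_castSucc]; exact hρη j
    rw [hconst, Kp_const]
    omega
  | succ k ih =>
    intro n D ρ η hk
    have hex : ∃ c₀, permLen (ρ c₀ * η⁻¹) ≠ 0 := by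
      by_contra hall
      push_neg at hall
      rw [dEta, Finset.sum_eq_zero (fun c _ => hall c)] at hk
      omega
    obtain ⟨c₀, hc₀⟩ := hex
    set g := ρ c₀ * η⁻¹ with hgdef
    have hg1 : g ≠ 1 := fun h => hc₀ (by rw [hgdef] at h ⊢; rw [h]; exact (permLen_eq_zero_iff 1).mpr rfl)
    obtain ⟨u, v, huv, hpeel⟩ := exists_peel g hg1
    set t := Equiv.swap u v with htdef
    set ρ' := Function.update ρ c₀ (t * ρ c₀) with hρ'def
    have hρ'c₀ : ρ' c₀ = t * ρ c₀ := Function.update_self _ _ _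
    have f2 : ρ' c₀ * η⁻¹ = t * g := by rw [hρ'c₀, hgdef, mul_assoc]
    have hlen : permLen (ρ' c₀ * η⁻¹) + 1 = permLen (ρ c₀ * η⁻¹) := by
      rw [f2, ← hgdef]; exact hpeel
    have hs1 := sum_update_perm (fun _ π => permLen (π * η⁻¹)) ρ c₀ (t * ρ c₀)
    rw [← hρ'def] at hs1
    have hd1 : dEta ρ' η = ∑ c', permLen (ρ' c' * η⁻¹) := rfl
    have hd2 : dEta ρ η = ∑ c', permLen (ρ c' * η⁻¹) := rfl
    rw [← hd1, ← hd2] at hs1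
    rw [mul_assoc t (ρ c₀) η⁻¹, ← hgdef, ← f2] at hs1
    rw [← hgdef] at hlen
    have hdnew : dEta ρ' η = k := by omega
    have hIH := ih ρ' η hdnew
    -- graph step : Kp (snoc ρ' η) ≤ Kp (snoc ρ η) + 1
    have hgr : Kp (Fin.snoc ρ' η : Fin (D+1) → Perm (Fin n)) ≤
        Kp (Fin.snoc ρ η : Fin (D+1) → Perm (Fin n)) + 1 := by
      have hstep := Kp_update_swap (Fin.snoc ρ' η : Fin (D+1) → Perm (Fin n))
        c₀.castSucc u v huv
      have heval : (Fin.snoc ρ' η : Fin (D+1) → Perm (Fin n)) c₀.castSucc = t * ρ c₀ := by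
        rw [Fin.snoc_castSucc, hρ'c₀]
      have hundo : Function.update (Fin.snoc ρ' η : Fin (D+1) → Perm (Fin n)) c₀.castSucc
          (Equiv.swap u v * (Fin.snoc ρ' η : Fin (D+1) → Perm (Fin n)) c₀.castSucc) =
          (Fin.snoc ρ η : Fin (D+1) → Perm (Fin n)) := by
        rw [heval, ← htdef, ← mul_assoc, Equiv.swap_mul_self, one_mul, ← snoc_update]
        congr 1
        rw [hρ'def, Function.update_idem, Function.update_eq_self]
      rw [hundo] at hstep
      exact hstep
    omega


end PairGraphLemmas

/-- Let `σ` be purely connected and melonic with canonical pairing `η`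
(`K_p(σ) = 1`, `ω̄(σ;η) = 0`), `D ≥ 3`. If `τ_c η⁻¹ ⪯ σ_c η⁻¹` for every `c`,
then `ω̄(τ;η) = 0`, `K_p(τ⌢η) = K_p(τ)`, and `K_p(σ⌢τ) + d(σ,τ) = K_p(τ)`. -/
theorem noncrossing_below_melonic
    (n D : ℕ) (hn : 1 ≤ n) (hD : 3 ≤ D)
    (σ τ : Fin D → Equiv.Perm (Fin n)) (η : Equiv.Perm (Fin n))
    (hK : Kp σ = 1) (hcan : omegaBar σ η = 0)
    (hgeo : ∀ c, geodesicLe (τ c * η⁻¹) (σ c * η⁻¹)) :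
    omegaBar τ η = 0 ∧
      Kp (Fin.snoc τ η : Fin (D + 1) → Equiv.Perm (Fin n)) = Kp τ ∧
      Kp (Fin.append σ τ : Fin (D + D) → Equiv.Perm (Fin n)) + dTuple σ τ =
        Kp τ := by

  -- Step 1 : Kp (σ⌢η) = 1
  have hK1 : Kp (Fin.snoc σ η : Fin (D+1) → Equiv.Perm (Fin n)) = 1 := by
    have hle : Kp (Fin.snoc σ η : Fin (D+1) → Equiv.Perm (Fin n)) ≤ Kp σ :=
      cc_card_mono (pairGraph_le_snoc σ η)
    have hge := Kp_pos hn (Fin.snoc σ η : Fin (D+1) → Equiv.Perm (Fin n))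
    omega
  -- Step 2 : d(σ,η) = n - 1
  have hdσ : dEta σ η + 1 = n := by
    rw [omegaBar, hK1, hK] at hcan
    have : (dEta σ η : ℤ) + 1 = n := by push_cast at hcan ⊢; linarith
    exact_mod_cast this
  -- Step 3 : geodesic identities
  have hsum : ∀ c, permLen (τ c * η⁻¹) + permLen (τ c * (σ c)⁻¹) =
      permLen (σ c * η⁻¹) := by
    intro c
    have h := hgeo c
    rw [geodesicLe] at h
    have harr : (τ c * η⁻¹) * (σ c * η⁻¹)⁻¹ = τ c * (σ c)⁻¹ := by group
    rw [harr] at h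
    exact h
  have hAB : dEta τ η + (∑ c, permLen (τ c * (σ c)⁻¹)) = dEta σ η := by
    rw [dEta, dEta, ← Finset.sum_add_distrib]
    exact Finset.sum_congr rfl fun c _ => hsum c
  -- upper and lower bounds
  have hupper : Kp τ + dEta τ η ≤ n :=
    indUpper _ σ τ η hK hdσ hsum rfl
  have hlower : n ≤ Kp (Fin.snoc τ η : Fin (D+1) → Equiv.Perm (Fin n)) + dEta τ η :=
    indLower _ τ η rfl
  have hmono : Kp (Fin.snoc τ η : Fin (D+1) → Equiv.Perm (Fin n)) ≤ Kp τ :=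
    cc_card_mono (pairGraph_le_snoc τ η)
  have hKτ : Kp τ + dEta τ η = n := by omega
  have hKs : Kp (Fin.snoc τ η : Fin (D+1) → Equiv.Perm (Fin n)) = Kp τ := by omega
  refine ⟨?_, hKs, ?_⟩
  · rw [omegaBar, hKs]
    have hz : (Kp τ : ℤ) + (dEta τ η : ℤ) = n := by exact_mod_cast hKτ
    ring_nf
    linarith
  · have hKapp : Kp (Fin.append σ τ : Fin (D + D) → Equiv.Perm (Fin n)) = 1 := by
      have hle : Kp (Fin.append σ τ : Fin (D + D) → Equiv.Perm (Fin n)) ≤ Kp σ :=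
        cc_card_mono (pairGraph_le_of_sub fun c => ⟨Fin.castAdd D c, Fin.append_left σ τ c⟩)
      have hge := Kp_pos hn (Fin.append σ τ : Fin (D + D) → Equiv.Perm (Fin n))
      omega
    have hdT : dTuple σ τ = ∑ c, permLen (τ c * (σ c)⁻¹) := by
      rw [dTuple]
      refine Finset.sum_congr rfl fun c _ => ?_
      rw [← permLen_inv (τ c * (σ c)⁻¹), mul_inv_rev, inv_inv]
    rw [hKapp, hdT]
    omega
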